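/- Let (Ω, S) be an association scheme and r, s ∈ S. Then the number of t ∈ S with c(r,s,t) > 0 is at most gcd(n_r, n_s). -/

import Mathlib

open Finset
open scoped Classical

/-- A coherent configuration on a finite set `Ω`: a partition `S` of `Ω × Ω` into nonempty
relations such that the diagonal is a union of relations, `S` is closed under transposition,
and the intersection numbers `c r s u` are well defined. -/
structure CoherentConfig (Ω : Type) [Fintype Ω] [DecidableEq Ω] where
  S : Finset (Finset (Ω × Ω))
  nonempty_mem : ∀ s ∈ S, s.Nonempty
  partition : ∀ x : Ω × Ω, ∃! s, s ∈ S ∧ x ∈ s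
  diag_union : ∀ s ∈ S, (∃ x ∈ s, x.1 = x.2) → ∀ y ∈ s, y.1 = y.2
  symm_mem : ∀ s ∈ S, s.image Prod.swap ∈ S
  c : Finset (Ω × Ω) → Finset (Ω × Ω) → Finset (Ω × Ω) → ℕ
  c_spec : ∀ r ∈ S, ∀ s ∈ S, ∀ u ∈ S, ∀ x ∈ u,
    (Finset.univ.filter (fun γ : Ω => (x.1, γ) ∈ r ∧ (γ, x.2) ∈ s)).card = c r s u

variable {Ω : Type} [Fintype Ω] [DecidableEq Ω]


/-- An association scheme: a coherent configuration in which the diagonal is a single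
basis relation. -/
structure AssocScheme (Ω : Type) [Fintype Ω] [DecidableEq Ω] extends CoherentConfig Ω where
  homog : Finset.univ.filter (fun x : Ω × Ω => x.1 = x.2) ∈ S

/-- The diagonal relation `1_Ω`. -/
def diagAll (Ω : Type) [Fintype Ω] [DecidableEq Ω] : Finset (Ω × Ω) :=
  Finset.univ.filter (fun x : Ω × Ω => x.1 = x.2)

/-- The valency `n_s = c(s, s*, 1_Ω)` of a basis relation. -/
def nval (A : AssocScheme Ω) (s : Finset (Ω × Ω)) : ℕ :=
  A.c s (s.image Prod.swap) (diagAll Ω)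

section Aux

variable {Ω : Type} [Fintype Ω] [DecidableEq Ω]

lemma mem_swap_iff {u : Finset (Ω × Ω)} {x y : Ω} :
    (x, y) ∈ u.image Prod.swap ↔ (y, x) ∈ u := by
  constructor
  · intro h
    rw [Finset.mem_image] at h
    obtain ⟨⟨a, b⟩, hab, h⟩ := h
    simp only [Prod.swap_prod_mk, Prod.mk.injEq] at h
    obtain ⟨rfl, rfl⟩ := h
    exact hab
  · intro h
    exact Finset.mem_image.mpr ⟨(y, x), h, rfl⟩

variable (A : AssocScheme Ω)

lemma fiber_card {t : Finset (Ω × Ω)} (ht : t ∈ A.S) (x : Ω) :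
    (Finset.univ.filter fun z => (x, z) ∈ t).card = nval A t := by
  have h := A.c_spec t ht _ (A.symm_mem t ht) _ A.homog (x, x) (by simp)
  rw [nval, diagAll, ← h]
  congr 1
  ext γ
  simp only [Finset.mem_filter, Finset.mem_univ, true_and, mem_swap_iff, and_self]

lemma nval_pos {t : Finset (Ω × Ω)} (ht : t ∈ A.S) : 0 < nval A t := by
  obtain ⟨⟨x, z⟩, hxz⟩ := A.nonempty_mem t ht
  rw [← fiber_card A ht x]
  exact Finset.card_pos.mpr ⟨z, Finset.mem_filter.mpr ⟨Finset.mem_univ z, hxz⟩⟩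

lemma card_eq_sum_ite (t : Finset (Ω × Ω)) :
    t.card = ∑ x : Ω, ∑ z : Ω, if (x, z) ∈ t then 1 else 0 := by
  calc t.card = ∑ p : Ω × Ω, if p ∈ t then 1 else 0 := by
        rw [Finset.sum_ite_mem, Finset.univ_inter, Finset.sum_const, smul_eq_mul, mul_one]
    _ = _ := Fintype.sum_prod_type _

lemma mul_sum_sum {c : ℕ} {f : Ω → Ω → ℕ} :
    (∑ x : Ω, ∑ z : Ω, c * f x z) = c * ∑ x : Ω, ∑ z : Ω, f x z := by
  rw [Finset.mul_sum]
  exact Finset.sum_congr rfl fun x _ => by rw [Finset.mul_sum]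

lemma card_eq_card_mul_nval {t : Finset (Ω × Ω)} (ht : t ∈ A.S) :
    t.card = Fintype.card Ω * nval A t := by
  rw [_root_.card_eq_sum_ite]
  have h : ∀ x : Ω, (∑ z : Ω, if (x, z) ∈ t then 1 else 0) = nval A t := by
    intro x
    rw [← fiber_card A ht x, Finset.card_filter]
  rw [Finset.sum_congr rfl fun x _ => h x, Finset.sum_const, smul_eq_mul, Finset.card_univ]

lemma sum_ite_and {p : Prop} [Decidable p] {q : Ω → Prop} [∀ z, Decidable (q z)] :
    (∑ z : Ω, if p ∧ q z then 1 else 0) = if p then (∑ z : Ω, if q z then 1 else 0) else 0 := by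
  by_cases h : p <;> simp [h]

/-- the number of triangles with sides r, s, t -/
def cnt3 (r s t : Finset (Ω × Ω)) : ℕ :=
  ∑ x : Ω, ∑ γ : Ω, ∑ z : Ω, if (x, γ) ∈ r ∧ (γ, z) ∈ s ∧ (x, z) ∈ t then 1 else 0

lemma cnt3_eq_t {r s t : Finset (Ω × Ω)} (hr : r ∈ A.S) (hs : s ∈ A.S) (ht : t ∈ A.S) :
    cnt3 r s t = t.card * A.c r s t := by
  have h1 : ∀ x z : Ω, (∑ γ : Ω, if (x, γ) ∈ r ∧ (γ, z) ∈ s ∧ (x, z) ∈ t then 1 else 0)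
      = if (x, z) ∈ t then A.c r s t else 0 := by
    intro x z
    have hiff : ∀ γ : Ω, ((x, γ) ∈ r ∧ (γ, z) ∈ s ∧ (x, z) ∈ t)
        ↔ ((x, z) ∈ t ∧ ((x, γ) ∈ r ∧ (γ, z) ∈ s)) := by tauto
    simp only [hiff]
    rw [sum_ite_and]
    by_cases hxz : (x, z) ∈ t
    · simp only [if_pos hxz]
      rw [← A.c_spec r hr s hs t ht (x, z) hxz, Finset.card_filter]
    · simp [hxz]
  calc cnt3 r s t = ∑ x : Ω, ∑ z : Ω, ∑ γ : Ω,
        if (x, γ) ∈ r ∧ (γ, z) ∈ s ∧ (x, z) ∈ t then 1 else 0 :=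
        Finset.sum_congr rfl fun x _ => Finset.sum_comm
    _ = ∑ x : Ω, ∑ z : Ω, if (x, z) ∈ t then A.c r s t else 0 :=
        Finset.sum_congr rfl fun x _ => Finset.sum_congr rfl fun z _ => h1 x z
    _ = ∑ x : Ω, ∑ z : Ω, A.c r s t * (if (x, z) ∈ t then 1 else 0) := by
        simp [mul_ite]
    _ = A.c r s t * t.card := by
        rw [_root_.card_eq_sum_ite]
        exact mul_sum_sum
    _ = t.card * A.c r s t := mul_comm _ _

lemma cnt3_eq_r {r s t : Finset (Ω × Ω)} (hr : r ∈ A.S) (hs : s ∈ A.S) (ht : t ∈ A.S) :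
    cnt3 r s t = r.card * A.c s (t.image Prod.swap) (r.image Prod.swap) := by
  have h1 : ∀ x γ : Ω, (∑ z : Ω, if (x, γ) ∈ r ∧ (γ, z) ∈ s ∧ (x, z) ∈ t then 1 else 0)
      = if (x, γ) ∈ r then A.c s (t.image Prod.swap) (r.image Prod.swap) else 0 := by
    intro x γ
    rw [sum_ite_and]
    by_cases hxγ : (x, γ) ∈ r
    · simp only [if_pos hxγ]
      have hmem : ((γ, x) : Ω × Ω) ∈ r.image Prod.swap := mem_swap_iff.mpr hxγ
      rw [← A.c_spec s hs _ (A.symm_mem t ht) _ (A.symm_mem r hr) (γ, x) hmem,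
        Finset.card_filter]
      exact Finset.sum_congr rfl fun z _ => by simp only [mem_swap_iff]
    · simp [hxγ]
  calc cnt3 r s t = ∑ x : Ω, ∑ γ : Ω,
        if (x, γ) ∈ r then A.c s (t.image Prod.swap) (r.image Prod.swap) else 0 :=
        Finset.sum_congr rfl fun x _ => Finset.sum_congr rfl fun γ _ => h1 x γ
    _ = ∑ x : Ω, ∑ γ : Ω, A.c s (t.image Prod.swap) (r.image Prod.swap)
          * (if (x, γ) ∈ r then 1 else 0) := by simp [mul_ite]
    _ = A.c s (t.image Prod.swap) (r.image Prod.swap) * r.card := by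
        rw [_root_.card_eq_sum_ite]
        exact mul_sum_sum
    _ = r.card * _ := mul_comm _ _

lemma cnt3_eq_s {r s t : Finset (Ω × Ω)} (hr : r ∈ A.S) (hs : s ∈ A.S) (ht : t ∈ A.S) :
    cnt3 r s t = s.card * A.c (t.image Prod.swap) r (s.image Prod.swap) := by
  have h1 : ∀ γ z : Ω, (∑ x : Ω, if (x, γ) ∈ r ∧ (γ, z) ∈ s ∧ (x, z) ∈ t then 1 else 0)
      = if (γ, z) ∈ s then A.c (t.image Prod.swap) r (s.image Prod.swap) else 0 := by
    intro γ z
    have hiff : ∀ x : Ω, ((x, γ) ∈ r ∧ (γ, z) ∈ s ∧ (x, z) ∈ t)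
        ↔ ((γ, z) ∈ s ∧ ((x, z) ∈ t ∧ (x, γ) ∈ r)) := by tauto
    simp only [hiff]
    rw [sum_ite_and]
    by_cases hγz : (γ, z) ∈ s
    · simp only [if_pos hγz]
      have hmem : ((z, γ) : Ω × Ω) ∈ s.image Prod.swap := mem_swap_iff.mpr hγz
      rw [← A.c_spec _ (A.symm_mem t ht) r hr _ (A.symm_mem s hs) (z, γ) hmem,
        Finset.card_filter]
      exact Finset.sum_congr rfl fun x _ => by simp only [mem_swap_iff]
    · simp [hγz]
  calc cnt3 r s t = ∑ γ : Ω, ∑ x : Ω, ∑ z : Ω,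
        if (x, γ) ∈ r ∧ (γ, z) ∈ s ∧ (x, z) ∈ t then 1 else 0 := Finset.sum_comm
    _ = ∑ γ : Ω, ∑ z : Ω, ∑ x : Ω,
        if (x, γ) ∈ r ∧ (γ, z) ∈ s ∧ (x, z) ∈ t then 1 else 0 :=
        Finset.sum_congr rfl fun γ _ => Finset.sum_comm
    _ = ∑ γ : Ω, ∑ z : Ω,
        if (γ, z) ∈ s then A.c (t.image Prod.swap) r (s.image Prod.swap) else 0 :=
        Finset.sum_congr rfl fun γ _ => Finset.sum_congr rfl fun z _ => h1 γ z
    _ = ∑ γ : Ω, ∑ z : Ω, A.c (t.image Prod.swap) r (s.image Prod.swap)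
          * (if (γ, z) ∈ s then 1 else 0) := by simp [mul_ite]
    _ = A.c (t.image Prod.swap) r (s.image Prod.swap) * s.card := by
        rw [_root_.card_eq_sum_ite]
        exact mul_sum_sum
    _ = s.card * _ := mul_comm _ _

lemma sum_partition_ite (p : Ω × Ω) :
    (∑ t ∈ A.S, if p ∈ t then 1 else 0) = 1 := by
  obtain ⟨t0, ⟨ht0, hp⟩, huniq⟩ := A.partition p
  rw [Finset.sum_eq_single t0]
  · simp [hp]
  · intro b hb hne
    have : p ∉ b := fun hpb => hne (huniq b ⟨hb, hpb⟩)
    simp [this]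
  · intro h; exact absurd ht0 h

lemma cnt3_sum {r s : Finset (Ω × Ω)} (hr : r ∈ A.S) (hs : s ∈ A.S) :
    (∑ t ∈ A.S, cnt3 r s t) = r.card * nval A s := by
  have step : (∑ t ∈ A.S, cnt3 r s t)
      = ∑ x : Ω, ∑ γ : Ω, ∑ z : Ω, ∑ t ∈ A.S,
          (if (x, γ) ∈ r ∧ (γ, z) ∈ s ∧ (x, z) ∈ t then 1 else 0) := by
    calc (∑ t ∈ A.S, cnt3 r s t)
        = ∑ t ∈ A.S, ∑ x : Ω, ∑ γ : Ω, ∑ z : Ω,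
            (if (x, γ) ∈ r ∧ (γ, z) ∈ s ∧ (x, z) ∈ t then 1 else 0) := rfl
      _ = ∑ x : Ω, ∑ t ∈ A.S, ∑ γ : Ω, ∑ z : Ω,
            (if (x, γ) ∈ r ∧ (γ, z) ∈ s ∧ (x, z) ∈ t then 1 else 0) := Finset.sum_comm
      _ = ∑ x : Ω, ∑ γ : Ω, ∑ t ∈ A.S, ∑ z : Ω,
            (if (x, γ) ∈ r ∧ (γ, z) ∈ s ∧ (x, z) ∈ t then 1 else 0) :=
          Finset.sum_congr rfl fun x _ => Finset.sum_comm
      _ = ∑ x : Ω, ∑ γ : Ω, ∑ z : Ω, ∑ t ∈ A.S,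
            (if (x, γ) ∈ r ∧ (γ, z) ∈ s ∧ (x, z) ∈ t then 1 else 0) :=
          Finset.sum_congr rfl fun x _ => Finset.sum_congr rfl fun γ _ => Finset.sum_comm
  rw [step]
  have inner : ∀ x γ z : Ω,
      (∑ t ∈ A.S, if (x, γ) ∈ r ∧ (γ, z) ∈ s ∧ (x, z) ∈ t then 1 else 0)
      = if (x, γ) ∈ r ∧ (γ, z) ∈ s then 1 else 0 := by
    intro x γ z
    by_cases h : (x, γ) ∈ r ∧ (γ, z) ∈ s
    · rw [if_pos h]
      conv_rhs => rw [← sum_partition_ite A (x, z)]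
      refine Finset.sum_congr rfl fun t _ => ?_
      have hiff : ((x, γ) ∈ r ∧ (γ, z) ∈ s ∧ (x, z) ∈ t) ↔ (x, z) ∈ t := by tauto
      rw [if_congr hiff rfl rfl]
    · rw [if_neg h]
      refine Finset.sum_eq_zero fun t _ => ?_
      have hn : ¬((x, γ) ∈ r ∧ (γ, z) ∈ s ∧ (x, z) ∈ t) := by tauto
      rw [if_neg hn]
  calc (∑ x : Ω, ∑ γ : Ω, ∑ z : Ω, ∑ t ∈ A.S,
          if (x, γ) ∈ r ∧ (γ, z) ∈ s ∧ (x, z) ∈ t then 1 else 0)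
      = ∑ x : Ω, ∑ γ : Ω, ∑ z : Ω, if (x, γ) ∈ r ∧ (γ, z) ∈ s then 1 else 0 :=
        Finset.sum_congr rfl fun x _ => Finset.sum_congr rfl fun γ _ =>
          Finset.sum_congr rfl fun z _ => inner x γ z
    _ = ∑ x : Ω, ∑ γ : Ω, if (x, γ) ∈ r then nval A s else 0 := by
        refine Finset.sum_congr rfl fun x _ => Finset.sum_congr rfl fun γ _ => ?_
        rw [sum_ite_and]
        by_cases h : (x, γ) ∈ r
        · simp only [if_pos h]
          rw [← fiber_card A hs γ, Finset.card_filter]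
        · simp [h]
    _ = ∑ x : Ω, ∑ γ : Ω, nval A s * (if (x, γ) ∈ r then 1 else 0) := by simp [mul_ite]
    _ = nval A s * r.card := by
        rw [_root_.card_eq_sum_ite]
        exact mul_sum_sum
    _ = r.card * nval A s := mul_comm _ _

end Aux

theorem stmt9 (A : AssocScheme Ω) (r s : Finset (Ω × Ω))
    (hr : r ∈ A.S) (hs : s ∈ A.S) :
    (A.S.filter fun t => A.c r s t ≠ 0).card ≤ Nat.gcd (nval A r) (nval A s) := by
  obtain ⟨⟨x0, y0⟩, hx0⟩ := A.nonempty_mem r hr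
  have hΩ : 0 < Fintype.card Ω := Fintype.card_pos_iff.mpr ⟨x0⟩
  have hnr : 0 < nval A r := nval_pos A hr
  have hns : 0 < nval A s := nval_pos A hs
  have key : ∀ t ∈ A.S.filter (fun t => A.c r s t ≠ 0),
      Nat.lcm (nval A r) (nval A s) ≤ nval A t * A.c r s t := by
    intro t ht'
    rw [Finset.mem_filter] at ht'
    obtain ⟨ht, hc⟩ := ht'
    have e1 : Fintype.card Ω * (nval A t * A.c r s t) = cnt3 r s t := by
      rw [cnt3_eq_t A hr hs ht, card_eq_card_mul_nval A ht, mul_assoc]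
    have e2 : cnt3 r s t
        = Fintype.card Ω * (nval A r * A.c s (t.image Prod.swap) (r.image Prod.swap)) := by
      rw [cnt3_eq_r A hr hs ht, card_eq_card_mul_nval A hr, mul_assoc]
    have e3 : cnt3 r s t
        = Fintype.card Ω * (nval A s * A.c (t.image Prod.swap) r (s.image Prod.swap)) := by
      rw [cnt3_eq_s A hr hs ht, card_eq_card_mul_nval A hs, mul_assoc]
    have h12 : nval A t * A.c r s t
        = nval A r * A.c s (t.image Prod.swap) (r.image Prod.swap) :=
      Nat.eq_of_mul_eq_mul_left hΩ (e1.trans e2)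
    have h13 : nval A t * A.c r s t
        = nval A s * A.c (t.image Prod.swap) r (s.image Prod.swap) :=
      Nat.eq_of_mul_eq_mul_left hΩ (e1.trans e3)
    have hdvd : Nat.lcm (nval A r) (nval A s) ∣ nval A t * A.c r s t :=
      Nat.lcm_dvd ⟨_, h12⟩ ⟨_, h13⟩
    exact Nat.le_of_dvd (Nat.mul_pos (nval_pos A ht) (Nat.pos_of_ne_zero hc)) hdvd
  have total : (∑ t ∈ A.S, nval A t * A.c r s t) = nval A r * nval A s := by
    apply Nat.eq_of_mul_eq_mul_left hΩ
    rw [Finset.mul_sum]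
    calc (∑ t ∈ A.S, Fintype.card Ω * (nval A t * A.c r s t))
        = ∑ t ∈ A.S, cnt3 r s t := Finset.sum_congr rfl fun t ht => by
          rw [cnt3_eq_t A hr hs ht, card_eq_card_mul_nval A ht, mul_assoc]
      _ = r.card * nval A s := cnt3_sum A hr hs
      _ = Fintype.card Ω * (nval A r * nval A s) := by
          rw [card_eq_card_mul_nval A hr, mul_assoc]
  have hK : (A.S.filter fun t => A.c r s t ≠ 0).card * Nat.lcm (nval A r) (nval A s)
      ≤ nval A r * nval A s := by
    calc (A.S.filter fun t => A.c r s t ≠ 0).card * Nat.lcm (nval A r) (nval A s)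
        = (A.S.filter fun t => A.c r s t ≠ 0).card • Nat.lcm (nval A r) (nval A s) := by
          rw [smul_eq_mul]
      _ ≤ ∑ t ∈ A.S.filter (fun t => A.c r s t ≠ 0), nval A t * A.c r s t :=
          Finset.card_nsmul_le_sum _ _ _ key
      _ ≤ ∑ t ∈ A.S, nval A t * A.c r s t := by
          apply Finset.sum_le_sum_of_subset (Finset.filter_subset _ _)
      _ = nval A r * nval A s := total
  have hlcm : 0 < Nat.lcm (nval A r) (nval A s) :=
    Nat.pos_of_ne_zero (Nat.lcm_ne_zero hnr.ne' hns.ne')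
  rw [← Nat.gcd_mul_lcm (nval A r) (nval A s)] at hK
  exact Nat.le_of_mul_le_mul_right hK hlcm
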